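/- (Proposition 2, cochain level) Let H be a Hopf algebra over ℂ acting on a unital ℂ-algebra A, i.e. there is a bilinear map H × A → A, (h,a) ↦ h(a), with h¹(h²(a)) = (h¹h²)(a), 1(a) = a, and h(ab) = ∑ h₍₁₎(a) h₍₂₎(b) for all h, h¹, h² ∈ H and a, b ∈ A. Let τ be a ℂ-linear functional on A which is a trace (τ(ab) = τ(ba)) and is δ-invariant: τ(h(a)b) = τ(a S̃(h)(b)) for all a, b ∈ A, h ∈ H. Define γ(h¹ ⊗ … ⊗ hⁿ)(x⁰,…,xⁿ) = τ(x⁰ h¹(x¹) ⋯ hⁿ(xⁿ)). Then γ intertwines the cyclic structures: γ(δᵢ(h¹⊗…⊗h^{n-1})) = δᵢ(γ(h¹⊗…⊗h^{n-1})) for 0 ≤ i ≤ n, γ(σᵢ(h¹⊗…⊗h^{n+1})) = σᵢ(γ(h¹⊗…⊗h^{n+1})) for 0 ≤ i ≤ n, and γ(τₙ(h¹⊗…⊗hⁿ))(x⁰,…,xⁿ) = γ(h¹⊗…⊗hⁿ)(xⁿ,x⁰,…,x^{n-1}). -/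

import Mathlib

/-!
Let `H` be a Hopf algebra over `ℂ` with coproduct `Δ = Coalgebra.comul`, counit
`ε = Coalgebra.counit`, antipode `S = HopfAlgebra.antipode` and unit `1`.  We fix a
character `δ : H →ₐ[ℂ] ℂ`.  The `δ`-twisted antipode is the linear map
`S̃(h) = ∑ δ(h₍₁₎) S(h₍₂₎)`.
-/

open TensorProduct

noncomputable section

variable (H : Type) [Ring H] [HopfAlgebra ℂ H]

/-- The `δ`-twisted antipode `S̃(h) = ∑ δ(h₍₁₎) S(h₍₂₎)`. -/
def twistedAntipode (δ : H →ₐ[ℂ] ℂ) : H →ₗ[ℂ] H :=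
  (TensorProduct.lid ℂ H).toLinearMap ∘ₗ
    (TensorProduct.map δ.toLinearMap (HopfAlgebra.antipode (R := ℂ))) ∘ₗ
      Coalgebra.comul

/-- A type bundled with a `ℂ`-algebra structure (used to form iterated tensor powers). -/
structure AlgPack : Type 1 where
  carrier : Type
  [ring : Ring carrier]
  [alg : Algebra ℂ carrier]

attribute [instance] AlgPack.ring AlgPack.alg

/-- The iterated tensor powers of `H`: `XB H n` bundles `H^{⊗(n+1)}` together with its
(componentwise) algebra structure coming from `Algebra.TensorProduct`. -/
def XB : ℕ → AlgPack
  | 0 => ⟨H⟩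
  | n + 1 => ⟨H ⊗[ℂ] (XB n).carrier⟩

/-- `X H n` is the tensor power `H^{⊗(n+1)}`; its multiplication `*` is the componentwise
product and its unit `1` is `1 ⊗ ... ⊗ 1`. -/
abbrev X (n : ℕ) : Type := (XB H n).carrier

/-- The pure tensor `h 0 ⊗ h 1 ⊗ ... ⊗ h n ∈ H^{⊗(n+1)}`. -/
def tp : ∀ n, (Fin (n + 1) → H) → X H n
  | 0, h => h 0
  | n + 1, h => h 0 ⊗ₜ[ℂ] tp n (Fin.tail h)

/-- The `n`-fold iterated coproduct `Δ⁽ⁿ⁾ : H →ₗ H^{⊗(n+1)}`. -/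
def Δiter : ∀ n, H →ₗ[ℂ] X H n
  | 0 => LinearMap.id
  | n + 1 => (TensorProduct.map LinearMap.id (Δiter n)) ∘ₗ Coalgebra.comul

/-- The face operators `δᵢ : H^{⊗(n+1)} →ₗ H^{⊗(n+2)}` (`0 ≤ i ≤ n + 2`):
`δ₀ = 1 ⊗ ·`, `δⱼ` applies `Δ` to the `j`-th factor for `1 ≤ j ≤ n + 1`, and
`δ_{n+2}` appends `1` on the right. -/
def dX : ℕ → ∀ n, X H n →ₗ[ℂ] X H (n + 1)
  | 0, n => TensorProduct.mk ℂ H (X H n) 1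
  | 1, 0 => (Coalgebra.comul : H →ₗ[ℂ] H ⊗[ℂ] H)
  | 1, n + 1 => (TensorProduct.assoc ℂ H H (X H n)).toLinearMap ∘ₗ
      (TensorProduct.map Coalgebra.comul LinearMap.id)
  | _ + 2, 0 => (TensorProduct.mk ℂ H H).flip 1
  | i + 2, n + 1 => TensorProduct.map LinearMap.id (dX (i + 1) n)

/-- The degeneracy operators `σᵢ : H^{⊗(n+2)} →ₗ H^{⊗(n+1)}` (`0 ≤ i ≤ n + 1`):
`σᵢ` applies the counit `ε` to the `(i+1)`-st factor. -/
def sX : ℕ → ∀ n, X H (n + 1) →ₗ[ℂ] X H n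
  | 0, n => (TensorProduct.lid ℂ (X H n)).toLinearMap ∘ₗ
      TensorProduct.map Coalgebra.counit LinearMap.id
  | _ + 1, 0 => (TensorProduct.rid ℂ H).toLinearMap ∘ₗ
      TensorProduct.map LinearMap.id (Coalgebra.counit : H →ₗ[ℂ] ℂ)
  | i + 1, n + 1 => TensorProduct.map LinearMap.id (sX i n)

/-- Appending `1 ∈ H` on the right: `h¹ ⊗ ... ⊗ h^{n+1} ↦ h¹ ⊗ ... ⊗ h^{n+1} ⊗ 1`. -/
def appOne : ∀ n, X H n →ₗ[ℂ] X H (n + 1)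
  | 0 => (TensorProduct.mk ℂ H H).flip 1
  | n + 1 => TensorProduct.map LinearMap.id (appOne n)

/-- The cyclic operator `τₙ : H^{⊗n} →ₗ H^{⊗n}` (here at index `X H n = H^{⊗(n+1)}`):
`τ(h¹ ⊗ ... ⊗ h^{n+1}) = Δ⁽ⁿ⁾(S̃(h¹)) · (h² ⊗ ... ⊗ h^{n+1} ⊗ 1)`,
where `·` is the componentwise product of `H^{⊗(n+1)}`. -/
def tauX (δ : H →ₐ[ℂ] ℂ) : ∀ n, X H n →ₗ[ℂ] X H n
  | 0 => twistedAntipode H δ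
  | n + 1 => LinearMap.mul' ℂ (X H (n + 1)) ∘ₗ
      TensorProduct.map (Δiter H (n + 1) ∘ₗ twistedAntipode H δ) (appOne H n)


variable (A : Type) [Ring A] [Algebra ℂ A]

/-- The face operators on `(n+1)`-linear forms on `A` (encoded as functions on tuples):
`(δᵢφ)(x⁰,…,xⁿ⁺¹) = φ(x⁰,…,xⁱxⁱ⁺¹,…,xⁿ⁺¹)` for `i ≤ n`, and
`(δ_{n+1}φ)(x⁰,…,xⁿ⁺¹) = φ(xⁿ⁺¹x⁰,x¹,…,xⁿ)`. -/
def dF (n i : ℕ) (φ : (Fin (n + 1) → A) → ℂ) : (Fin (n + 2) → A) → ℂ :=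
  fun x =>
    if i ≤ n then
      φ (fun k => if (k : ℕ) < i then x k.castSucc
                  else if (k : ℕ) = i then x k.castSucc * x k.succ
                  else x k.succ)
    else
      φ (fun k => if (k : ℕ) = 0 then x (Fin.last (n + 1)) * x 0 else x k.castSucc)

/-- The degeneracy operators on forms: `(σⱼφ)(x⁰,…,xⁿ) = φ(x⁰,…,xʲ,1,xʲ⁺¹,…,xⁿ)`. -/
def sF (n j : ℕ) (φ : (Fin (n + 2) → A) → ℂ) : (Fin (n + 1) → A) → ℂ :=
  fun x =>
    φ (fun k => if h : (k : ℕ) ≤ j ∧ (k : ℕ) < n + 1 then x ⟨k, h.2⟩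
                else if (k : ℕ) = j + 1 then 1
                else if h : (k : ℕ) - 1 < n + 1 then x ⟨(k : ℕ) - 1, h⟩ else 1)

/-- The cyclic operator on forms: `(τₙφ)(x⁰,…,xⁿ) = φ(xⁿ,x⁰,…,xⁿ⁻¹)`. -/
def tF (n : ℕ) (φ : (Fin (n + 1) → A) → ℂ) : (Fin (n + 1) → A) → ℂ :=
  fun x => φ (fun k => x (k - 1))

variable (act : H →ₗ[ℂ] A →ₗ[ℂ] A)

/-- Evaluation `evA n x : H^{⊗(n+1)} →ₗ A`,
`h¹ ⊗ ... ⊗ h^{n+1} ↦ h¹(x⁰) · h²(x¹) ⋯ h^{n+1}(xⁿ)`, where `h(a) = act h a`. -/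
def evA : ∀ n, (Fin (n + 1) → A) → (X H n →ₗ[ℂ] A)
  | 0, x => act.flip (x 0)
  | n + 1, x => TensorProduct.lift
      ((LinearMap.mul ℂ A).compl₁₂ (act.flip (x 0)) (evA n (Fin.tail x)))

/-- The characteristic map `γ : H^{⊗(n+1)} →ₗ Cⁿ⁺¹(A)`,
`γ(h¹ ⊗ ... ⊗ hⁿ⁺¹)(x⁰,…,xⁿ⁺¹) = tr(x⁰ · h¹(x¹) ⋯ hⁿ⁺¹(xⁿ⁺¹))`. -/
def gammaMap (tr : A →ₗ[ℂ] ℂ) (n : ℕ) : X H n →ₗ[ℂ] ((Fin (n + 2) → A) → ℂ) where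
  toFun ξ x := tr (x 0 * evA H A act n (Fin.tail x) ξ)
  map_add' ξ η := by funext x; simp [map_add, mul_add]
  map_smul' c ξ := by funext x; simp [map_smul, mul_smul_comm]


section Aux
open Coalgebra HopfAlgebra TensorProduct

variable {H : Type} [Ring H] [HopfAlgebra ℂ H] {A : Type} [Ring A] [Algebra ℂ A]
  (act : H →ₗ[ℂ] A →ₗ[ℂ] A)

lemma gammaMap_apply (tr : A →ₗ[ℂ] ℂ) (n : ℕ) (ξ : X H n) (x : Fin (n+2) → A) :
    gammaMap H A act tr n ξ x = tr (x 0 * evA H A act n (Fin.tail x) ξ) := rfl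

lemma evA_tmul (n : ℕ) (x : Fin (n+2) → A) (h : H) (ξ : X H n) :
    evA H A act (n+1) x (h ⊗ₜ ξ) = act h (x 0) * evA H A act n (Fin.tail x) ξ := rfl

lemma evA_zero' (x : Fin 1 → A) (h : H) : evA H A act 0 x h = act h (x 0) := rfl

lemma act_one_mul
    (hact_mul : ∀ h₁ h₂ : H, act (h₁ * h₂) = act h₁ ∘ₗ act h₂)
    (hact_one : act 1 = LinearMap.id)
    (hact_hopf : ∀ (h : H) (a b : A),
      act h (a * b) = TensorProduct.lift
        ((LinearMap.mul ℂ A).compl₁₂ (act.flip a) (act.flip b)) (Coalgebra.comul (R := ℂ) h))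
    (h : H) (b : A) :
    act h 1 * b = Coalgebra.counit (R := ℂ) h • b := by
  set T : H ⊗[ℂ] H →ₗ[ℂ] A :=
    act.flip b ∘ₗ LinearMap.mul' ℂ H ∘ₗ (HopfAlgebra.antipode (R := ℂ)).lTensor H with hT
  have hTcomul : ∀ k : H, T (comul (R := ℂ) k) = Coalgebra.counit (R := ℂ) k • b := by
    intro k
    rw [hT]
    simp only [LinearMap.comp_apply, mul_antipode_lTensor_comul_apply,
      Algebra.algebraMap_eq_smul_one, map_smul, LinearMap.flip_apply, hact_one,
      LinearMap.id_apply]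
  set D : H →ₗ[ℂ] A := act.flip b ∘ₗ HopfAlgebra.antipode (R := ℂ) with hD
  set u : H →ₗ[ℂ] A := act.flip 1 with hu
  set W : H ⊗[ℂ] (H ⊗[ℂ] H) →ₗ[ℂ] A :=
    TensorProduct.lift ((LinearMap.mul ℂ A).compl₁₂ u T) with hW
  have hWt : ∀ (p : H) (t : H ⊗[ℂ] H), W (p ⊗ₜ t) = act p 1 * T t := by
    intro p t
    simp [hW, hu]
  have hTΨ : ∀ t : H ⊗[ℂ] H, T t = TensorProduct.lift (act.compl₂ D) t := by
    intro t
    induction t using TensorProduct.induction_on with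
    | zero => simp
    | tmul p q =>
      simp only [hT, LinearMap.comp_apply, LinearMap.mul'_apply, lift.tmul,
        LinearMap.lTensor_tmul, LinearMap.compl₂_apply, hD, LinearMap.flip_apply, hact_mul]
    | add y z hy hz => simp [map_add, hy, hz]
  have e3 : TensorProduct.lift (act.compl₂ D) =
      W ∘ₗ (TensorProduct.assoc ℂ H H H).toLinearMap ∘ₗ (comul (R := ℂ)).rTensor H := by
    apply TensorProduct.ext'
    intro h₁ h₂
    have aux : ∀ t : H ⊗[ℂ] H, W ((TensorProduct.assoc ℂ H H H) (t ⊗ₜ h₂)) =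
        TensorProduct.lift ((LinearMap.mul ℂ A).compl₁₂ u (act.flip (D h₂))) t := by
      intro t
      induction t using TensorProduct.induction_on with
      | zero =>
        rw [zero_tmul, (TensorProduct.assoc ℂ H H H).map_zero, map_zero, map_zero]
      | tmul p q =>
        rw [TensorProduct.assoc_tmul, hWt]
        simp only [hT, LinearMap.comp_apply, LinearMap.mul'_apply, lift.tmul,
          LinearMap.lTensor_tmul, LinearMap.compl₁₂_apply, LinearMap.mul_apply',
          LinearMap.flip_apply, hact_mul, hu, hD]
      | add y z hy hz => rw [add_tmul, map_add, map_add, hy, hz, map_add]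
    simp only [LinearMap.comp_apply, LinearMap.rTensor_tmul, LinearEquiv.coe_coe, aux]
    rw [lift.tmul]
    have := hact_hopf h₁ 1 (D h₂)
    rw [one_mul] at this
    simpa [hu] using this
  have e5 : ∀ t : H ⊗[ℂ] H, W ((comul (R := ℂ)).lTensor H t) =
      TensorProduct.lift ((LinearMap.mul ℂ A).compl₁₂ u
        ((LinearMap.toSpanSingleton ℂ A b) ∘ₗ Coalgebra.counit (R := ℂ))) t := by
    intro t
    induction t using TensorProduct.induction_on with
    | zero => simp
    | tmul p k =>
      rw [LinearMap.lTensor_tmul, hWt, hTcomul]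
      simp [hu]
    | add y z hy hz => simp [map_add, hy, hz]
  have e6 : TensorProduct.lift ((LinearMap.mul ℂ A).compl₁₂ u
      ((LinearMap.toSpanSingleton ℂ A b) ∘ₗ Coalgebra.counit (R := ℂ))) (comul (R := ℂ) h) =
      act h 1 * b := by
    have aux : ∀ t : H ⊗[ℂ] H, TensorProduct.lift ((LinearMap.mul ℂ A).compl₁₂ u
        ((LinearMap.toSpanSingleton ℂ A b) ∘ₗ Coalgebra.counit (R := ℂ))) t =
        (LinearMap.mulRight ℂ b) (u ((TensorProduct.rid ℂ H)
          ((Coalgebra.counit (R := ℂ)).lTensor H t))) := by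
      intro t
      induction t using TensorProduct.induction_on with
      | zero => simp
      | tmul p k =>
        simp [LinearMap.toSpanSingleton_apply, TensorProduct.rid_tmul, hu,
          mul_smul_comm, smul_mul_assoc]
      | add y z hy hz => simp [map_add, hy, hz]
    rw [aux, lTensor_counit_comul]
    simp [hu]
  have chain : Coalgebra.counit (R := ℂ) h • b = act h 1 * b := by
    rw [← hTcomul h, hTΨ]
    have e3' := LinearMap.congr_fun e3 (comul (R := ℂ) h)
    rw [e3']
    simp only [LinearMap.comp_apply, LinearEquiv.coe_coe]
    rw [coassoc_apply, e5, e6]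
  exact chain.symm

lemma act_one_eq
    (hact_mul : ∀ h₁ h₂ : H, act (h₁ * h₂) = act h₁ ∘ₗ act h₂)
    (hact_one : act 1 = LinearMap.id)
    (hact_hopf : ∀ (h : H) (a b : A),
      act h (a * b) = TensorProduct.lift
        ((LinearMap.mul ℂ A).compl₁₂ (act.flip a) (act.flip b)) (Coalgebra.comul (R := ℂ) h))
    (h : H) :
    act h 1 = Coalgebra.counit (R := ℂ) h • (1:A) := by
  have := act_one_mul act hact_mul hact_one hact_hopf h 1
  rwa [mul_one] at this

end Aux

lemma X_induction {H : Type} [Ring H] [HopfAlgebra ℂ H] {n : ℕ} {P : X H (n+1) → Prop}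
    (ξ : X H (n+1)) (zero : P 0) (tmul : ∀ (h : H) (ξ' : X H n), P (h ⊗ₜ[ℂ] ξ'))
    (add : ∀ y z : X H (n+1), P y → P z → P (y + z)) : P ξ :=
  TensorProduct.induction_on ξ zero tmul add

section Aux2
open Coalgebra HopfAlgebra TensorProduct

variable {H : Type} [Ring H] [HopfAlgebra ℂ H] {A : Type} [Ring A] [Algebra ℂ A]
  (act : H →ₗ[ℂ] A →ₗ[ℂ] A)

lemma evA_appOne (hact_one : act 1 = LinearMap.id) :
    ∀ (n : ℕ) (x : Fin (n+2) → A) (ξ : X H n),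
      evA H A act (n+1) x (appOne H n ξ) =
        evA H A act n (Fin.init x) ξ * x (Fin.last (n+1)) := by
  intro n
  induction n with
  | zero =>
    intro x ξ
    show act ξ (x 0) * act 1 (Fin.tail x 0) = act ξ (Fin.init x 0) * x (Fin.last 1)
    rw [hact_one]
    rfl
  | succ n ih =>
    intro x ξ
    induction ξ using X_induction with
    | zero => simp
    | tmul h ξ' =>
      show act h (x 0) * evA H A act (n+1) (Fin.tail x) (appOne H n ξ') = _
      rw [ih]
      show _ = (act h (Fin.init x 0) * evA H A act n (Fin.tail (Fin.init x)) ξ')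
        * x (Fin.last (n+2))
      have h1 : Fin.init x 0 = x 0 := rfl
      have h2 : Fin.init (Fin.tail x) = Fin.tail (Fin.init x) := by
        funext k
        simp only [Fin.init, Fin.tail, Fin.succ_castSucc]
      have h3 : Fin.tail x (Fin.last (n+1)) = x (Fin.last (n+2)) := by
        simp only [Fin.tail, Fin.succ_last]
      rw [h1, h2, h3, mul_assoc]
    | add y z hy hz => simp only [map_add, hy, hz, add_mul]

lemma dX_top : ∀ n, dX H (n+2) n = appOne H n := by
  intro n
  induction n with
  | zero => rfl
  | succ n ih =>
    show TensorProduct.map LinearMap.id (dX H (n+2) n) = _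
    rw [ih]
    rfl

lemma evA_Diter_mul
    (hact_mul : ∀ h₁ h₂ : H, act (h₁ * h₂) = act h₁ ∘ₗ act h₂)
    (hact_hopf : ∀ (h : H) (a b : A),
      act h (a * b) = TensorProduct.lift
        ((LinearMap.mul ℂ A).compl₁₂ (act.flip a) (act.flip b)) (Coalgebra.comul (R := ℂ) h)) :
    ∀ (n : ℕ) (x : Fin (n+1) → A) (k : H) (η : X H n),
      evA H A act n x (Δiter H n k * η) = act k (evA H A act n x η) := by
  intro n
  induction n with
  | zero =>
    intro x k η
    exact LinearMap.congr_fun (hact_mul k η) (x 0)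
  | succ n ih =>
    intro x k η
    induction η using X_induction with
    | zero => simp
    | tmul h η' =>
      have aux : ∀ (c : H ⊗[ℂ] H) (w w' : X H (n+1)),
          w = TensorProduct.map LinearMap.id (Δiter H n) c → w' = h ⊗ₜ[ℂ] η' →
          evA H A act (n+1) x (w * w') =
          TensorProduct.lift ((LinearMap.mul ℂ A).compl₁₂ (act.flip (act h (x 0)))
            (act.flip (evA H A act n (Fin.tail x) η'))) c := by
        intro c
        induction c using TensorProduct.induction_on with
        | zero =>
          intro w w' hw hw'
          subst hw hw'
          rw [map_zero]
          exact (congrArg _ (zero_mul _)).trans ((map_zero _).trans (map_zero _).symm)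
        | tmul k₁ k₂ =>
          intro w w' hw hw'
          subst hw hw'
          show evA H A act (n+1) x
            (((k₁ ⊗ₜ[ℂ] Δiter H n k₂) * (h ⊗ₜ[ℂ] η') : H ⊗[ℂ] X H n)) = _
          rw [Algebra.TensorProduct.tmul_mul_tmul]
          show act (k₁ * h) (x 0) * evA H A act n (Fin.tail x) (Δiter H n k₂ * η') = _
          rw [ih, lift.tmul]
          simp only [LinearMap.compl₁₂_apply, LinearMap.flip_apply, LinearMap.mul_apply',
            hact_mul, LinearMap.comp_apply]
        | add y z hy hz =>
          intro w w' hw hw'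
          subst hw hw'
          rw [map_add]
          refine (congrArg _ (add_mul (R := X H (n+1)) _ _ _)).trans ?_
          rw [map_add, map_add, hy _ _ rfl rfl, hz _ _ rfl rfl]
      have h1 : Δiter H (n+1) k = TensorProduct.map LinearMap.id (Δiter H n)
          (Coalgebra.comul (R := ℂ) k) := rfl
      rw [h1, aux (Coalgebra.comul (R := ℂ) k) _ _ rfl rfl]
      rw [show evA H A act (n+1) x (h ⊗ₜ η')
        = act h (x 0) * evA H A act n (Fin.tail x) η' from rfl]
      exact (hact_hopf k _ _).symm
    | add y z hy hz =>
      rw [mul_add, map_add, map_add, hy, hz, map_add]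

end Aux2

section Aux3
open Coalgebra HopfAlgebra TensorProduct

/-- merging two adjacent arguments, matching the formula in `dF`. -/
def mrgF (A : Type) [Ring A] [Algebra ℂ A] (n i : ℕ) (x : Fin (n + 2) → A) :
    Fin (n + 1) → A :=
  fun k => if (k : ℕ) < i then x k.castSucc
           else if (k : ℕ) = i then x k.castSucc * x k.succ
           else x k.succ

variable {H : Type} [Ring H] [HopfAlgebra ℂ H] {A : Type} [Ring A] [Algebra ℂ A]
  (act : H →ₗ[ℂ] A →ₗ[ℂ] A)

lemma mrg_tail (n i : ℕ) (x : Fin (n + 3) → A) :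
    Fin.tail (mrgF A (n+1) (i+1) x) = mrgF A n i (Fin.tail x) := by
  funext k
  simp only [mrgF, Fin.tail, Fin.val_succ, Fin.succ_castSucc]
  split_ifs <;> first | rfl | (exfalso; omega)

lemma mrg_zero_succ (n i : ℕ) (x : Fin (n + 3) → A) :
    mrgF A (n+1) (i+1) x 0 = x 0 := by
  simp [mrgF, Nat.zero_lt_succ]

lemma mrg_zero_zero (n : ℕ) (x : Fin (n + 2) → A) :
    mrgF A n 0 x 0 = x 0 * Fin.tail x 0 := by
  simp [mrgF, Fin.tail]

lemma mrg_tail_zero (n : ℕ) (x : Fin (n + 3) → A) :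
    Fin.tail (mrgF A (n+1) 0 x) = Fin.tail (Fin.tail x) := by
  funext k
  simp [mrgF, Fin.tail]

lemma evA_dX_mid
    (hact_mul : ∀ h₁ h₂ : H, act (h₁ * h₂) = act h₁ ∘ₗ act h₂)
    (hact_hopf : ∀ (h : H) (a b : A),
      act h (a * b) = TensorProduct.lift
        ((LinearMap.mul ℂ A).compl₁₂ (act.flip a) (act.flip b)) (Coalgebra.comul (R := ℂ) h)) :
    ∀ (n m : ℕ), m ≤ n → ∀ (x : Fin (n+2) → A) (ξ : X H n),
      evA H A act (n+1) x (dX H (m+1) n ξ) = evA H A act n (mrgF A n m x) ξ := by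
  intro n
  induction n with
  | zero =>
    intro m hm x ξ
    obtain rfl : m = 0 := Nat.le_zero.mp hm
    show TensorProduct.lift ((LinearMap.mul ℂ A).compl₁₂ (act.flip (x 0))
      (act.flip (Fin.tail x 0))) (Coalgebra.comul (R := ℂ) (A := H) ξ) = act ξ (mrgF A 0 0 x 0)
    rw [mrg_zero_zero]; exact (hact_hopf ξ _ _).symm
  | succ n ih =>
    intro m hm x ξ
    cases m with
    | zero =>
      induction ξ using X_induction with
      | zero => simp
      | tmul h ξ' =>
        have aux : ∀ (c : H ⊗[ℂ] H) (w : X H (n+2)),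
            w = (TensorProduct.assoc ℂ H H (X H n)) (c ⊗ₜ[ℂ] ξ') →
            evA H A act (n+2) x w =
            TensorProduct.lift ((LinearMap.mul ℂ A).compl₁₂ (act.flip (x 0))
              ((LinearMap.mulRight ℂ (evA H A act n (Fin.tail (Fin.tail x)) ξ')) ∘ₗ
                act.flip (Fin.tail x 0))) c := by
          intro c
          induction c using TensorProduct.induction_on with
          | zero =>
            intro w hw; subst hw
            rw [zero_tmul, (TensorProduct.assoc ℂ H H (X H n)).map_zero, map_zero]
            exact map_zero _
          | tmul a b =>
            intro w hw; subst hw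
            rw [TensorProduct.assoc_tmul]
            show act a (x 0) * (act b (Fin.tail x 0) *
              evA H A act n (Fin.tail (Fin.tail x)) ξ') = _
            rw [lift.tmul]
            simp only [LinearMap.compl₁₂_apply, LinearMap.flip_apply, LinearMap.mul_apply',
              LinearMap.mulRight_apply, LinearMap.comp_apply]
          | add y z hy hz =>
            intro w hw; subst hw
            rw [add_tmul, (TensorProduct.assoc ℂ H H (X H n)).map_add]
            refine (map_add (evA H A act (n+2) x) _ _).trans ?_
            rw [hy _ rfl, hz _ rfl, map_add]
        have aux2 : ∀ c : H ⊗[ℂ] H,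
            TensorProduct.lift ((LinearMap.mul ℂ A).compl₁₂ (act.flip (x 0))
              ((LinearMap.mulRight ℂ (evA H A act n (Fin.tail (Fin.tail x)) ξ')) ∘ₗ
                act.flip (Fin.tail x 0))) c
            = TensorProduct.lift ((LinearMap.mul ℂ A).compl₁₂ (act.flip (x 0))
                (act.flip (Fin.tail x 0))) c
              * evA H A act n (Fin.tail (Fin.tail x)) ξ' := by
          intro c
          induction c using TensorProduct.induction_on with
          | zero => rw [map_zero, map_zero, zero_mul]
          | tmul a b =>
            rw [lift.tmul, lift.tmul]
            simp only [LinearMap.compl₁₂_apply, LinearMap.flip_apply, LinearMap.mul_apply',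
              LinearMap.mulRight_apply, LinearMap.comp_apply, mul_assoc]
          | add y z hy hz => rw [map_add, map_add, hy, hz, add_mul]
        show evA H A act (n+2) x
          ((TensorProduct.assoc ℂ H H (X H n)) ((Coalgebra.comul (R := ℂ) h) ⊗ₜ[ℂ] ξ')) = _
        rw [aux _ _ rfl, aux2, ← hact_hopf]
        show _ = act h (mrgF A (n+1) 0 x 0) * evA H A act n (Fin.tail (mrgF A (n+1) 0 x)) ξ'
        rw [mrg_zero_zero, mrg_tail_zero]
      | add y z hy hz => simp only [map_add, hy, hz]
    | succ m =>
      have hm' : m ≤ n := Nat.succ_le_succ_iff.mp hm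
      induction ξ using X_induction with
      | zero => simp
      | tmul h ξ' =>
        show act h (x 0) * evA H A act (n+1) (Fin.tail x) (dX H (m+1) n ξ') = _
        rw [ih m hm' (Fin.tail x) ξ']
        show _ = act h (mrgF A (n+1) (m+1) x 0) *
          evA H A act n (Fin.tail (mrgF A (n+1) (m+1) x)) ξ'
        rw [mrg_tail, mrg_zero_succ]
      | add y z hy hz => simp only [map_add, hy, hz]

end Aux3

section Aux4
open Coalgebra HopfAlgebra TensorProduct

/-- inserting `1` at position `i`. -/
def insF (A : Type) [Ring A] [Algebra ℂ A] (n i : ℕ) (x : Fin (n + 1) → A) :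
    Fin (n + 2) → A :=
  fun k => if (k : ℕ) = i then 1
           else if (k : ℕ) < i then x ⟨min (k : ℕ) n, Nat.lt_succ_of_le (Nat.min_le_right _ _)⟩
           else x ⟨min ((k : ℕ) - 1) n, Nat.lt_succ_of_le (Nat.min_le_right _ _)⟩

variable {H : Type} [Ring H] [HopfAlgebra ℂ H] {A : Type} [Ring A] [Algebra ℂ A]
  (act : H →ₗ[ℂ] A →ₗ[ℂ] A)

lemma insF_zero_succ (n i : ℕ) (x : Fin (n + 1) → A) :
    insF A n (i+1) x 0 = x 0 := by
  have h0 : ((0 : Fin (n+2)) : ℕ) = 0 := rfl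
  simp only [insF, h0]
  rw [if_neg (by omega), if_pos (by omega)]
  congr 1

lemma insF_tail_zero (n : ℕ) (x : Fin (n + 1) → A) :
    Fin.tail (insF A n 0 x) = x := by
  funext k
  simp only [Fin.tail, insF, Fin.val_succ]
  rw [if_neg (by omega), if_neg (by omega)]
  congr 1
  exact Fin.ext (by simp [Nat.lt_succ_iff.mp k.isLt])

lemma insF_tail_succ (n i : ℕ) (x : Fin (n + 2) → A) :
    Fin.tail (insF A (n+1) (i+1) x) = insF A n i (Fin.tail x) := by
  funext k
  simp only [Fin.tail, insF, Fin.val_succ]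
  split_ifs <;>
    first
      | rfl
      | (exfalso; omega)
      | (congr 1; exact Fin.ext (by simp only [Fin.val_succ]; omega))

lemma evA_sX
    (hact_mul : ∀ h₁ h₂ : H, act (h₁ * h₂) = act h₁ ∘ₗ act h₂)
    (hact_one : act 1 = LinearMap.id)
    (hact_hopf : ∀ (h : H) (a b : A),
      act h (a * b) = TensorProduct.lift
        ((LinearMap.mul ℂ A).compl₁₂ (act.flip a) (act.flip b)) (Coalgebra.comul (R := ℂ) h)) :
    ∀ (n i : ℕ), i ≤ n + 1 → ∀ (x : Fin (n+1) → A) (ξ : X H (n+1)),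
      evA H A act n x (sX H i n ξ) = evA H A act (n+1) (insF A n i x) ξ := by
  have act1 : ∀ h : H, act h (1:A) = Coalgebra.counit (R := ℂ) h • (1:A) :=
    act_one_eq act hact_mul hact_one hact_hopf
  intro n
  induction n with
  | zero =>
    intro i hi x ξ
    induction ξ using X_induction with
    | zero => simp
    | tmul h g =>
      match i, hi with
      | 0, _ =>
        have e : sX H 0 0 (h ⊗ₜ[ℂ] g) = Coalgebra.counit (R := ℂ) h • g := by
          show (TensorProduct.lid ℂ (X H 0)) ((Coalgebra.counit (R := ℂ) h : ℂ) ⊗ₜ g) = _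
          simp
        rw [e, map_smul]
        show Coalgebra.counit (R := ℂ) h • act g (x 0) =
          act h (insF A 0 0 x 0) * act g (Fin.tail (insF A 0 0 x) 0)
        rw [insF_tail_zero, show insF A 0 0 x 0 = 1 from rfl, act1]
        rw [smul_mul_assoc, one_mul]
      | 1, _ =>
        have e : sX H 1 0 (h ⊗ₜ[ℂ] g) = Coalgebra.counit (R := ℂ) (A := H) g • h := by
          show (TensorProduct.rid ℂ H) (h ⊗ₜ (Coalgebra.counit (R := ℂ) (A := H) g : ℂ)) = _
          simp
        rw [e, show evA H A act 0 x (Coalgebra.counit (R := ℂ) (A := H) g • h) =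
          Coalgebra.counit (R := ℂ) (A := H) g • evA H A act 0 x h from map_smul _ _ _]
        show (Coalgebra.counit (R := ℂ) (A := H) g • act h) (x 0) =
          act h (insF A 0 1 x 0) * act g (Fin.tail (insF A 0 1 x) 0)
        rw [insF_zero_succ]
        have e2 : Fin.tail (insF A 0 1 x) 0 = 1 := rfl
        rw [e2]; erw [act1]
        simp [mul_smul_comm]
    | add y z hy hz => simp only [map_add, hy, hz]
  | succ n ih =>
    intro i hi x ξ
    induction ξ using X_induction with
    | zero => simp
    | tmul h ξ' =>
      cases i with
      | zero =>
        have e : sX H 0 (n+1) (h ⊗ₜ[ℂ] ξ') = Coalgebra.counit (R := ℂ) h • ξ' := by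
          show (TensorProduct.lid ℂ (X H (n+1))) ((Coalgebra.counit (R := ℂ) h : ℂ) ⊗ₜ ξ') = _
          simp
        rw [e, map_smul]
        show Coalgebra.counit (R := ℂ) h • evA H A act (n+1) x ξ' =
          act h (insF A (n+1) 0 x 0) *
            evA H A act (n+1) (Fin.tail (insF A (n+1) 0 x)) ξ'
        rw [insF_tail_zero, show insF A (n+1) 0 x 0 = 1 from rfl, act1]
        rw [smul_mul_assoc, one_mul]
      | succ i =>
        have hi' : i ≤ n + 1 := Nat.succ_le_succ_iff.mp hi
        show act h (x 0) * evA H A act n (Fin.tail x) (sX H i n ξ') = _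
        rw [ih i hi' (Fin.tail x) ξ']
        show _ = act h (insF A (n+1) (i+1) x 0) *
          evA H A act (n+1) (Fin.tail (insF A (n+1) (i+1) x)) ξ'
        rw [insF_zero_succ, insF_tail_succ]
    | add y z hy hz => simp only [map_add, hy, hz]

end Aux4

/-- **Proposition 2, cochain level.** Let the Hopf algebra `H` act on the
unital `ℂ`-algebra `A` (via `act`, satisfying `h¹(h²(a)) = (h¹h²)(a)`, `1(a) = a` and
`h(ab) = ∑ h₍₁₎(a) h₍₂₎(b)`), and let `tr` be a `δ`-invariant trace on `A`.  Then the
characteristic map `γ` intertwines the cyclic structures of `{H^{⊗n}}` and of the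
cyclic module `{Cⁿ(A)}` of multilinear forms on `A`. -/
theorem gamma_intertwines (δ : H →ₐ[ℂ] ℂ) (tr : A →ₗ[ℂ] ℂ)
    (hact_mul : ∀ h₁ h₂ : H, act (h₁ * h₂) = act h₁ ∘ₗ act h₂)
    (hact_one : act 1 = LinearMap.id)
    (hact_hopf : ∀ (h : H) (a b : A),
      act h (a * b) = TensorProduct.lift
        ((LinearMap.mul ℂ A).compl₁₂ (act.flip a) (act.flip b)) (Coalgebra.comul (R := ℂ) h))
    (htrace : ∀ a b : A, tr (a * b) = tr (b * a))
    (hinvariant : ∀ (h : H) (a b : A),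
      tr (act h a * b) = tr (a * act (twistedAntipode H δ h) b)) :
    -- γ ∘ δᵢ = δᵢ ∘ γ
    (∀ (n i : ℕ), i ≤ n + 2 → ∀ ξ : X H n,
        gammaMap H A act tr (n + 1) (dX H i n ξ) =
          dF A (n + 1) i (gammaMap H A act tr n ξ)) ∧
    -- γ ∘ σᵢ = σᵢ ∘ γ
    (∀ (n i : ℕ), i ≤ n + 1 → ∀ ξ : X H (n + 1),
        gammaMap H A act tr n (sX H i n ξ) =
          sF A (n + 1) i (gammaMap H A act tr (n + 1) ξ)) ∧
    -- γ ∘ τₙ = τₙ ∘ γ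
    (∀ (n : ℕ) (ξ : X H n),
        gammaMap H A act tr n (tauX H δ n ξ) =
          tF A (n + 1) (gammaMap H A act tr n ξ)) := by
  refine ⟨?_, ?_, ?_⟩
  · -- faces
    intro n i hi ξ
    funext x
    rw [gammaMap_apply]
    by_cases h0 : i ≤ n + 1
    · have hdF : dF A (n+1) i (gammaMap H A act tr n ξ) x
          = gammaMap H A act tr n ξ (mrgF A (n+1) i x) := by
        simp only [dF]
        rw [if_pos h0]
        rfl
      rw [hdF, gammaMap_apply]
      cases i with
      | zero =>
        have e1 : evA H A act (n+1) (Fin.tail x) (dX H 0 n ξ)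
            = act 1 (Fin.tail x 0) * evA H A act n (Fin.tail (Fin.tail x)) ξ := rfl
        rw [e1, hact_one, mrg_zero_zero, mrg_tail_zero]
        show tr (x 0 * (Fin.tail x 0 * evA H A act n (Fin.tail (Fin.tail x)) ξ))
          = tr (x 0 * Fin.tail x 0 * evA H A act n (Fin.tail (Fin.tail x)) ξ)
        rw [mul_assoc]
      | succ m =>
        rw [evA_dX_mid act hact_mul hact_hopf n m (by omega) (Fin.tail x) ξ,
          mrg_zero_succ, mrg_tail]
    · obtain rfl : i = n + 2 := by omega
      simp only [dF]
      rw [if_neg h0]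
      obtain ⟨Y, hYdef⟩ : ∃ Y : Fin (n+1+1) → A,
          Y = (fun k : Fin (n+1+1) =>
            if (k : ℕ) = 0 then x (Fin.last (n+1+1)) * x 0 else x k.castSucc) := ⟨_, rfl⟩
      rw [← hYdef, gammaMap_apply]
      have hY0 : Y 0 = x (Fin.last (n+2)) * x 0 := by rw [hYdef]; simp
      have hYt : Fin.tail Y = Fin.init (Fin.tail x) := by
        rw [hYdef]
        funext k
        simp only [Fin.tail, Fin.init]
        rw [if_neg (by simp [Fin.val_succ])]
        first
          | rfl
          | congr 1
          | (congr 1; exact Fin.ext (by simp))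
      rw [hY0, hYt, dX_top, evA_appOne act hact_one n (Fin.tail x) ξ]
      rw [show Fin.tail x (Fin.last (n+1)) = x (Fin.last (n+2)) from
        by simp [Fin.tail, Fin.succ_last]]
      rw [← mul_assoc, htrace, ← mul_assoc]
  · -- degeneracies
    intro n i hi ξ
    funext x
    rw [gammaMap_apply, evA_sX act hact_mul hact_one hact_hopf n i hi (Fin.tail x) ξ]
    obtain ⟨Y, hYdef⟩ : ∃ Y : Fin (n+1+2) → A,
        Y = (fun k : Fin (n+1+2) =>
          if h : (k : ℕ) ≤ i ∧ (k : ℕ) < n + 1 + 1 then x ⟨k, h.2⟩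
          else if (k : ℕ) = i + 1 then 1
          else if h : (k : ℕ) - 1 < n + 1 + 1 then x ⟨(k : ℕ) - 1, h⟩ else 1) := ⟨_, rfl⟩
    have h1 : sF A (n+1) i (gammaMap H A act tr (n+1) ξ) x
        = tr (Y 0 * evA H A act (n+1) (Fin.tail Y) ξ) := by
      rw [hYdef]; rfl
    rw [h1]
    have hY0 : Y 0 = x 0 := by rw [hYdef]; simp
    have hYt : Fin.tail Y = insF A n i (Fin.tail x) := by
      rw [hYdef]
      funext k
      simp only [Fin.tail, insF, Fin.val_succ]
      split_ifs <;>
        first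
          | rfl
          | (exfalso; omega)
          | (congr 1; exact Fin.ext (by simp only [Fin.val_succ]; omega))
    rw [hY0, hYt]
  · -- cyclic
    intro n ξ
    cases n with
    | zero =>
      funext x
      rw [gammaMap_apply]
      show tr (x 0 * act (twistedAntipode H δ ξ) (Fin.tail x 0)) = _
      rw [← hinvariant ξ (x 0) (Fin.tail x 0), htrace]
      rfl
    | succ n =>
      induction ξ using X_induction with
      | zero => funext x; simp [tF]
      | tmul h ξ' =>
        funext x
        rw [gammaMap_apply]
        have htau : tauX H δ (n+1) (h ⊗ₜ[ℂ] ξ')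
            = Δiter H (n+1) (twistedAntipode H δ h) * appOne H n ξ' := by
          show LinearMap.mul' ℂ (X H (n+1)) (_ ⊗ₜ _) = _
          simp [LinearMap.mul'_apply]
        rw [htau, evA_Diter_mul act hact_mul hact_hopf (n+1) (Fin.tail x) _ _,
          evA_appOne act hact_one n (Fin.tail x) ξ', ← hinvariant h (x 0) _]
        obtain ⟨Y, hYdef⟩ : ∃ Y : Fin (n+1+2) → A,
            Y = (fun k : Fin (n+1+2) => x (k - 1)) := ⟨_, rfl⟩
        have h2 : tF A (n+2) (gammaMap H A act tr (n+1) (h ⊗ₜ[ℂ] ξ')) x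
            = tr (Y 0 * (act h (Fin.tail Y 0) *
                evA H A act n (Fin.tail (Fin.tail Y)) ξ')) := by
          rw [hYdef]; rfl
        rw [h2]
        have hY0 : Y 0 = x (Fin.last (n+2)) := by
          rw [hYdef]
          show x ((0 : Fin (n+3)) - 1) = _
          congr 1
          exact Fin.ext (by simp [Fin.coe_sub_one])
        have hY1 : Fin.tail Y 0 = x 0 := by
          rw [hYdef]
          show x ((Fin.succ 0 : Fin (n+3)) - 1) = _
          congr 1
          exact Fin.ext (by simp [Fin.coe_sub_one, Fin.succ_ne_zero])
        have hY2 : Fin.tail (Fin.tail Y) = Fin.init (Fin.tail x) := by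
          rw [hYdef]
          funext k
          show x (k.succ.succ - 1) = x (k.castSucc.succ)
          congr 1
          exact Fin.ext (by simp [Fin.coe_sub_one, Fin.succ_ne_zero])
        rw [hY0, hY1, hY2]
        rw [show Fin.tail x (Fin.last (n+1)) = x (Fin.last (n+2)) from
          by simp [Fin.tail, Fin.succ_last]]
        rw [← mul_assoc, htrace]
      | add y z hy hz =>
        funext x
        have hy' := congrFun hy x
        have hz' := congrFun hz x
        simp only [map_add, Pi.add_apply, tF] at hy' hz' ⊢
        rw [hy', hz']
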